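/- Let S ∈ ℝ^{n×m} satisfy ‖x^T(SSᵀ - I)x‖ ≤ ε‖x‖² for all x ∈ ℝ^n, with 0 < ε. Then for any A ∈ ℝ^{n×d} and every index i, the i-th eigenvalue of AᵀSSᵀA satisfies λ_i(AᵀA) - ε·λ_max(AᵀA) ≤ λ_i(AᵀSSᵀA) ≤ λ_i(AᵀA) + ε·λ_max(AᵀA). -/

import Mathlib

open Matrix BigOperators Finset

variable {d : ℕ}

lemma sum_dot (v : Fin d → (Fin d → ℝ)) (c : Fin d → ℝ) (w : Fin d → ℝ) :
    (∑ j, c j • v j) ⬝ᵥ w = ∑ j, c j * (v j ⬝ᵥ w) := by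
  simp only [dotProduct, Finset.sum_apply, Pi.smul_apply, smul_eq_mul, Finset.sum_mul,
    Finset.mul_sum]
  rw [Finset.sum_comm]
  exact sum_congr rfl fun j _ => sum_congr rfl fun i _ => mul_assoc _ _ _

lemma dot_sum (v : Fin d → (Fin d → ℝ)) (c : Fin d → ℝ) (w : Fin d → ℝ) :
    w ⬝ᵥ (∑ j, c j • v j) = ∑ j, c j * (w ⬝ᵥ v j) := by
  simp only [dotProduct, Finset.sum_apply, Pi.smul_apply, smul_eq_mul, Finset.sum_mul,
    Finset.mul_sum]
  rw [Finset.sum_comm]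
  exact sum_congr rfl fun j _ => sum_congr rfl fun i _ => by ring

lemma dot_sum_sum (u : Fin d → (Fin d → ℝ))
    (hu : ∀ j k, u j ⬝ᵥ u k = if j = k then 1 else 0) (c b : Fin d → ℝ) :
    (∑ j, c j • u j) ⬝ᵥ (∑ k, b k • u k) = ∑ j, c j * b j := by
  rw [sum_dot]
  refine sum_congr rfl fun j _ => ?_
  rw [dot_sum]
  simp [hu]

lemma quad_sum (M : Matrix (Fin d) (Fin d) ℝ) (u : Fin d → (Fin d → ℝ))
    (hu : ∀ j k, u j ⬝ᵥ u k = if j = k then 1 else 0)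
    (lam : Fin d → ℝ) (hMu : ∀ j, M *ᵥ u j = lam j • u j) (c : Fin d → ℝ) :
    (∑ j, c j • u j) ⬝ᵥ (M *ᵥ (∑ j, c j • u j)) = ∑ j, lam j * c j ^ 2 := by
  have hx : M *ᵥ (∑ j, c j • u j) = ∑ j, (lam j * c j) • u j := by
    show M.mulVecLin (∑ j, c j • u j) = _
    rw [map_sum]
    simp only [Matrix.mulVecLin_apply, Matrix.mulVec_smul, hMu, smul_smul]
    exact sum_congr rfl fun j _ => by rw [mul_comm]
  rw [hx, sum_dot]
  refine sum_congr rfl fun j _ => ?_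
  rw [dot_sum]
  simp [hu]
  ring

section SpanTools
variable {d : ℕ}
local notation "E" => EuclideanSpace ℝ (Fin d)

lemma dot_eq_inner (x y : E) : (x : Fin d → ℝ) ⬝ᵥ (y : Fin d → ℝ) = (inner ℝ x y : ℝ) := by
  simp [dotProduct, PiLp.inner_apply, mul_comm]

lemma coef_zero_of_mem_span (w : OrthonormalBasis (Fin d) ℝ E) (P : Fin d → Prop)
    {x : E} (hx : x ∈ Submodule.span ℝ (Set.range fun j : {j : Fin d // P j} => w j))
    {k : Fin d} (hk : ¬ P k) : (inner ℝ (w k) x : ℝ) = 0 := by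
  induction hx using Submodule.span_induction with
  | mem y hy =>
    obtain ⟨j, rfl⟩ := hy
    have : k ≠ (j : Fin d) := fun h => hk (h ▸ j.2)
    simpa using w.orthonormal.2 this
  | zero => simp
  | add y z _ _ hy hz => rw [inner_add_right, hy, hz, add_zero]
  | smul a y _ hy => rw [inner_smul_right, hy, mul_zero]

lemma finrank_span_orthonormal (w : OrthonormalBasis (Fin d) ℝ E) (P : Fin d → Prop)
    [Fintype {j : Fin d // P j}] :
    Module.finrank ℝ (Submodule.span ℝ (Set.range fun j : {j : Fin d // P j} => w j))
      = Fintype.card {j : Fin d // P j} :=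
  finrank_span_eq_card (w.orthonormal.linearIndependent.comp _ Subtype.val_injective)

lemma weyl_core {B C : Matrix (Fin d) (Fin d) ℝ}
    (hB : B.IsHermitian) (hC : C.IsHermitian)
    {μ ν : Fin d → ℝ} (hμa : Antitone μ) (hνa : Antitone ν)
    (eB : Equiv.Perm (Fin d)) (heB : μ = hB.eigenvalues ∘ eB)
    (eC : Equiv.Perm (Fin d)) (heC : ν = hC.eigenvalues ∘ eC)
    {δ : ℝ}
    (hδ : ∀ y : Fin d → ℝ, y ⬝ᵥ B *ᵥ y ≤ y ⬝ᵥ C *ᵥ y + δ * (y ⬝ᵥ y))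
    (i : Fin d) : μ i ≤ ν i + δ := by
  classical
  set w : OrthonormalBasis (Fin d) ℝ E := hB.eigenvectorBasis.reindex eB.symm with hw
  set z : OrthonormalBasis (Fin d) ℝ E := hC.eigenvectorBasis.reindex eC.symm with hz
  have hwj : ∀ j, w j = hB.eigenvectorBasis (eB j) := by
    intro j; rw [hw, OrthonormalBasis.reindex_apply, Equiv.symm_symm]
  have hzj : ∀ j, z j = hC.eigenvectorBasis (eC j) := by
    intro j; rw [hz, OrthonormalBasis.reindex_apply, Equiv.symm_symm]
  have hwdot : ∀ j k, (w j : Fin d → ℝ) ⬝ᵥ (w k : Fin d → ℝ) = if j = k then 1 else 0 := by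
    intro j k
    rw [dot_eq_inner, orthonormal_iff_ite.1 w.orthonormal]
  have hzdot : ∀ j k, (z j : Fin d → ℝ) ⬝ᵥ (z k : Fin d → ℝ) = if j = k then 1 else 0 := by
    intro j k
    rw [dot_eq_inner, orthonormal_iff_ite.1 z.orthonormal]
  have hBw : ∀ j, B *ᵥ (w j : Fin d → ℝ) = μ j • (w j : Fin d → ℝ) := by
    intro j; rw [hwj, heB]; exact hB.mulVec_eigenvectorBasis (eB j)
  have hCz : ∀ j, C *ᵥ (z j : Fin d → ℝ) = ν j • (z j : Fin d → ℝ) := by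
    intro j; rw [hzj, heC]; exact hC.mulVec_eigenvectorBasis (eC j)
  -- subspaces
  set U := Submodule.span ℝ (Set.range fun j : {j : Fin d // j ≤ i} => w j) with hU
  set V := Submodule.span ℝ (Set.range fun j : {j : Fin d // i ≤ j} => z j) with hV
  have hUr : Module.finrank ℝ U = (i : ℕ) + 1 := by
    rw [hU, finrank_span_orthonormal w (fun j => j ≤ i)]
    convert Fin.card_Iic i using 1
    simp [Fintype.card_subtype, Finset.filter_ge_eq_Iic]
  have hVr : Module.finrank ℝ V = d - (i : ℕ) := by
    rw [hV, finrank_span_orthonormal z (fun j => i ≤ j)]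
    convert Fin.card_Ici i using 1
    simp [Fintype.card_subtype, Finset.filter_le_eq_Ici]
  have hsup : Module.finrank ℝ ↥(U ⊔ V) ≤ d :=
    le_trans (Submodule.finrank_le _) (le_of_eq finrank_euclideanSpace_fin)
  have hinf : 0 < Module.finrank ℝ ↥(U ⊓ V) := by
    have h := Submodule.finrank_sup_add_finrank_inf_eq U V
    have hi : (i : ℕ) < d := i.isLt
    omega
  obtain ⟨x, hxUV, hx0⟩ : ∃ x ∈ U ⊓ V, x ≠ 0 := by
    by_contra h
    push_neg at h
    have : U ⊓ V = ⊥ := by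
      rw [eq_bot_iff]; intro x hx
      by_contra hx0
      exact hx0 (h x hx)
    rw [this, finrank_bot] at hinf
    exact lt_irrefl 0 hinf
  have hxU : x ∈ U := hxUV.1
  have hxV : x ∈ V := hxUV.2
  set c : Fin d → ℝ := fun j => (inner ℝ (w j) x : ℝ) with hc
  set b : Fin d → ℝ := fun j => (inner ℝ (z j) x : ℝ) with hb
  have hxc : (∑ j, c j • ((w j : E) : Fin d → ℝ)) = (x : Fin d → ℝ) := by
    have h := congrArg WithLp.ofLp (w.sum_repr' x)
    rw [WithLp.ofLp_sum] at h
    simpa only [hc, WithLp.ofLp_smul] using h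
  have hxb : (∑ j, b j • ((z j : E) : Fin d → ℝ)) = (x : Fin d → ℝ) := by
    have h := congrArg WithLp.ofLp (z.sum_repr' x)
    rw [WithLp.ofLp_sum] at h
    simpa only [hb, WithLp.ofLp_smul] using h
  have hc0 : ∀ k, ¬ (k ≤ i) → c k = 0 := fun k hk =>
    coef_zero_of_mem_span w (fun j => j ≤ i) hxU hk
  have hb0 : ∀ k, ¬ (i ≤ k) → b k = 0 := fun k hk =>
    coef_zero_of_mem_span z (fun j => i ≤ j) hxV hk
  have qB : (x : Fin d → ℝ) ⬝ᵥ (B *ᵥ (x : Fin d → ℝ)) = ∑ j, μ j * c j ^ 2 := by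
    rw [← hxc]; exact quad_sum B _ hwdot μ hBw c
  have qC : (x : Fin d → ℝ) ⬝ᵥ (C *ᵥ (x : Fin d → ℝ)) = ∑ j, ν j * b j ^ 2 := by
    rw [← hxb]; exact quad_sum C _ hzdot ν hCz b
  have qxc : (x : Fin d → ℝ) ⬝ᵥ (x : Fin d → ℝ) = ∑ j, c j ^ 2 := by
    rw [← hxc, dot_sum_sum _ hwdot]
    exact sum_congr rfl fun j _ => (sq (c j)).symm
  have qxb : (x : Fin d → ℝ) ⬝ᵥ (x : Fin d → ℝ) = ∑ j, b j ^ 2 := by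
    rw [← hxb, dot_sum_sum _ hzdot]
    exact sum_congr rfl fun j _ => (sq (b j)).symm
  have ht : 0 < (x : Fin d → ℝ) ⬝ᵥ (x : Fin d → ℝ) := by
    have hx0' : (x : Fin d → ℝ) ≠ 0 := (WithLp.ofLp_eq_zero 2).ne.2 hx0
    obtain ⟨k, hk⟩ := Function.ne_iff.1 hx0'
    have hkpos : 0 < x k * x k := mul_self_pos.2 hk
    exact Finset.sum_pos' (fun j _ => mul_self_nonneg _) ⟨k, Finset.mem_univ k, hkpos⟩
  have hlow : μ i * ((x : Fin d → ℝ) ⬝ᵥ (x : Fin d → ℝ)) ≤ ∑ j, μ j * c j ^ 2 := by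
    rw [qxc, Finset.mul_sum]
    refine Finset.sum_le_sum fun j _ => ?_
    by_cases h : j ≤ i
    · exact mul_le_mul_of_nonneg_right (hμa h) (sq_nonneg _)
    · simp [hc0 j h]
  have hup : ∑ j, ν j * b j ^ 2 ≤ ν i * ((x : Fin d → ℝ) ⬝ᵥ (x : Fin d → ℝ)) := by
    rw [qxb, Finset.mul_sum]
    refine Finset.sum_le_sum fun j _ => ?_
    by_cases h : i ≤ j
    · exact mul_le_mul_of_nonneg_right (hνa h) (sq_nonneg _)
    · simp [hb0 j h]
  set t : ℝ := (x : Fin d → ℝ) ⬝ᵥ (x : Fin d → ℝ) with htdef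
  have hmain : μ i * t ≤ (ν i + δ) * t := by
    calc μ i * t ≤ ∑ j, μ j * c j ^ 2 := hlow
    _ = (x : Fin d → ℝ) ⬝ᵥ (B *ᵥ (x : Fin d → ℝ)) := qB.symm
    _ ≤ (x : Fin d → ℝ) ⬝ᵥ (C *ᵥ (x : Fin d → ℝ)) + δ * t := hδ x
    _ = (∑ j, ν j * b j ^ 2) + δ * t := by rw [qC]
    _ ≤ ν i * t + δ * t := add_le_add_left hup _
    _ = (ν i + δ) * t := by ring
  exact le_of_mul_le_mul_right hmain ht


lemma quad_le_sup {C : Matrix (Fin d) (Fin d) ℝ} (hC : C.IsHermitian) {ν : Fin d → ℝ}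
    (eC : Equiv.Perm (Fin d)) (heC : ν = hC.eigenvalues ∘ eC) (s : ℝ) (hs : ∀ j, ν j ≤ s)
    (y : Fin d → ℝ) : y ⬝ᵥ (C *ᵥ y) ≤ s * (y ⬝ᵥ y) := by
  classical
  set z : OrthonormalBasis (Fin d) ℝ E := hC.eigenvectorBasis.reindex eC.symm with hz
  have hzdot : ∀ j k, (z j : Fin d → ℝ) ⬝ᵥ (z k : Fin d → ℝ) = if j = k then 1 else 0 := by
    intro j k; rw [dot_eq_inner, orthonormal_iff_ite.1 z.orthonormal]
  have hCz : ∀ j, C *ᵥ (z j : Fin d → ℝ) = ν j • (z j : Fin d → ℝ) := by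
    intro j
    rw [hz, OrthonormalBasis.reindex_apply, Equiv.symm_symm, heC]
    exact hC.mulVec_eigenvectorBasis (eC j)
  set b : Fin d → ℝ := fun j => (inner ℝ (z j) (WithLp.toLp 2 y : E) : ℝ) with hb
  have hyb : (∑ j, b j • ((z j : E) : Fin d → ℝ)) = y := by
    have h := congrArg WithLp.ofLp (z.sum_repr' (WithLp.toLp 2 y : E))
    rw [WithLp.ofLp_sum] at h
    simpa only [hb, WithLp.ofLp_smul] using h
  have qC : y ⬝ᵥ (C *ᵥ y) = ∑ j, ν j * b j ^ 2 := by
    rw [← hyb]; exact quad_sum C _ hzdot ν hCz b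
  have qy : y ⬝ᵥ y = ∑ j, b j ^ 2 := by
    rw [← hyb, dot_sum_sum _ hzdot]
    exact Finset.sum_congr rfl fun j _ => (sq (b j)).symm
  rw [qC, qy, Finset.mul_sum]
  exact Finset.sum_le_sum fun j _ => mul_le_mul_of_nonneg_right (hs j) (sq_nonneg _)

end SpanTools

lemma conj_quad {n d : ℕ} (A : Matrix (Fin n) (Fin d) ℝ) (M : Matrix (Fin n) (Fin n) ℝ)
    (y : Fin d → ℝ) :
    y ⬝ᵥ ((Aᵀ * M * A) *ᵥ y) = (A *ᵥ y) ⬝ᵥ (M *ᵥ (A *ᵥ y)) := by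
  rw [Matrix.mul_assoc, ← Matrix.mulVec_mulVec, Matrix.dotProduct_mulVec, Matrix.vecMul_transpose,
    ← Matrix.mulVec_mulVec]


/-- Weyl-type eigenvalue perturbation bound for `AᵀSSᵀA` versus `AᵀA`,
where `μ` and `ν` are the eigenvalues listed in decreasing order. -/
theorem stmt_1 {n m d : ℕ} (ε : ℝ) (hε : 0 < ε)
    (A : Matrix (Fin n) (Fin d) ℝ) (S : Matrix (Fin n) (Fin m) ℝ)
    (hS : ∀ x : Fin n → ℝ, |x ⬝ᵥ ((S * Sᵀ - 1).mulVec x)| ≤ ε * ∑ i, x i ^ 2)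
    (hH : (Aᵀ * S * Sᵀ * A).IsHermitian) (hA : (Aᵀ * A).IsHermitian)
    (μ ν : Fin d → ℝ) (hμa : Antitone μ) (hνa : Antitone ν)
    (hμ : ∃ e : Equiv.Perm (Fin d), μ = hH.eigenvalues ∘ e)
    (hν : ∃ e : Equiv.Perm (Fin d), ν = hA.eigenvalues ∘ e) :
    ∀ i, ν i - ε * (⨆ j, ν j) ≤ μ i ∧ μ i ≤ ν i + ε * (⨆ j, ν j) := by
  intro i
  obtain ⟨eB, heB⟩ := hμ
  obtain ⟨eC, heC⟩ := hν
  have hsupν : ∀ j, ν j ≤ ⨆ j, ν j := fun j =>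
    le_ciSup (Set.finite_range ν).bddAbove j
  -- quadratic identities
  have hCq : ∀ y : Fin d → ℝ, y ⬝ᵥ ((Aᵀ * A) *ᵥ y) = (A *ᵥ y) ⬝ᵥ (A *ᵥ y) := by
    intro y
    have h := conj_quad A 1 y
    rwa [Matrix.mul_one, Matrix.one_mulVec] at h
  have hCsq : ∀ y : Fin d → ℝ, y ⬝ᵥ ((Aᵀ * A) *ᵥ y) = ∑ k, (A *ᵥ y) k ^ 2 := by
    intro y
    rw [hCq y]
    exact Finset.sum_congr rfl fun k _ => (sq ((A *ᵥ y) k)).symm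
  have hCnn : ∀ y : Fin d → ℝ, 0 ≤ y ⬝ᵥ ((Aᵀ * A) *ᵥ y) := by
    intro y
    rw [hCsq y]
    exact Finset.sum_nonneg fun k _ => sq_nonneg _
  have hdiff : ∀ y : Fin d → ℝ,
      |y ⬝ᵥ ((Aᵀ * S * Sᵀ * A) *ᵥ y) - y ⬝ᵥ ((Aᵀ * A) *ᵥ y)|
        ≤ ε * (y ⬝ᵥ ((Aᵀ * A) *ᵥ y)) := by
    intro y
    have key : y ⬝ᵥ ((Aᵀ * S * Sᵀ * A) *ᵥ y) - y ⬝ᵥ ((Aᵀ * A) *ᵥ y)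
        = (A *ᵥ y) ⬝ᵥ ((S * Sᵀ - 1) *ᵥ (A *ᵥ y)) := by
      rw [Matrix.sub_mulVec, dotProduct_sub, Matrix.one_mulVec]
      have h1 : y ⬝ᵥ ((Aᵀ * S * Sᵀ * A) *ᵥ y) = (A *ᵥ y) ⬝ᵥ ((S * Sᵀ) *ᵥ (A *ᵥ y)) := by
        have := conj_quad A (S * Sᵀ) y
        rwa [← Matrix.mul_assoc Aᵀ S Sᵀ] at this
      rw [h1, hCq y]
    rw [key, hCsq]
    exact hS (A *ᵥ y)
  have hCsup : ∀ y : Fin d → ℝ,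
      y ⬝ᵥ ((Aᵀ * A) *ᵥ y) ≤ (⨆ j, ν j) * (y ⬝ᵥ y) :=
    quad_le_sup hA eC heC _ hsupν
  have hδ1 : ∀ y : Fin d → ℝ, y ⬝ᵥ ((Aᵀ * S * Sᵀ * A) *ᵥ y)
      ≤ y ⬝ᵥ ((Aᵀ * A) *ᵥ y) + (ε * (⨆ j, ν j)) * (y ⬝ᵥ y) := by
    intro y
    have h1 := (abs_le.1 (hdiff y)).2
    have h2 : ε * (y ⬝ᵥ ((Aᵀ * A) *ᵥ y)) ≤ ε * ((⨆ j, ν j) * (y ⬝ᵥ y)) :=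
      mul_le_mul_of_nonneg_left (hCsup y) hε.le
    nlinarith [h1, h2]
  have hδ2 : ∀ y : Fin d → ℝ, y ⬝ᵥ ((Aᵀ * A) *ᵥ y)
      ≤ y ⬝ᵥ ((Aᵀ * S * Sᵀ * A) *ᵥ y) + (ε * (⨆ j, ν j)) * (y ⬝ᵥ y) := by
    intro y
    have h1 := (abs_le.1 (hdiff y)).1
    have h2 : ε * (y ⬝ᵥ ((Aᵀ * A) *ᵥ y)) ≤ ε * ((⨆ j, ν j) * (y ⬝ᵥ y)) :=
      mul_le_mul_of_nonneg_left (hCsup y) hε.le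
    nlinarith [h1, h2]
  constructor
  · have := weyl_core hA hH hνa hμa eC heC eB heB hδ2 i
    linarith
  · have := weyl_core hH hA hμa hνa eB heB eC heC hδ1 i
    linarith
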